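/- arXiv:1102.2689 — 3 statements merged into one kernel-verified Lean document; each statement's English description precedes it below -/
import Mathlib

section
/- Let w ∈ S_n and let u_1, u_2 ∈ S_n with u_1 ≤_L w and u_2 ≤_L w. Then there exists v ∈ S_n with v ≤_L w whose Lehmer code is the coordinatewise minimum: c(v) = c(u_1) ∧ c(u_2). That is, the set c(Λ_w) ⊆ ℕ^n is closed under the coordinatewise meet of ℕ^n. -/
/-- The inversion set of `w`: pairs of positions `(i,j)` with `i < j` and `w i > w j`. -/
def Invs {n : ℕ} (w : Equiv.Perm (Fin n)) : Finset (Fin n × Fin n) :=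
  Finset.univ.filter (fun p => p.1 < p.2 ∧ w p.2 < w p.1)

/-- The length (number of inversions) of `w`. -/
def len {n : ℕ} (w : Equiv.Perm (Fin n)) : ℕ := (Invs w).card

/-- The `i`-th entry of the Lehmer code of `w`. -/
def lehmer {n : ℕ} (w : Equiv.Perm (Fin n)) (i : Fin n) : ℕ :=
  ((Invs w).filter (fun p => p.1 = i)).card

/-- The extended Lehmer code `m_{i,j}(w)`: the number of inversions `(i,k)` with `k < j`. -/
def mext {n : ℕ} (w : Equiv.Perm (Fin n)) (i : Fin n) (j : Fin (n + 1)) : ℕ :=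
  ((Invs w).filter (fun p => p.1 = i ∧ (p.2 : ℕ) < (j : ℕ))).card

/-- The left weak order: `v ≤_L w` iff `inv(v) ⊆ inv(w)`. -/
def leftWeak {n : ℕ} (v w : Equiv.Perm (Fin n)) : Prop := Invs v ⊆ Invs w

/-- The value of `w` extended to `Fin (n+1)` by fixing the last point
(the `1`-indexed convention `w(n+1) = n+1` becomes `wval w n = n` here). -/
def wval {n : ℕ} (w : Equiv.Perm (Fin n)) (j : Fin (n + 1)) : ℕ :=
  if h : (j : ℕ) < n then (w ⟨j, h⟩ : ℕ) else n

/-- The set of non-inversions of `w`: pairs `(i,j)` with `i ≤ j ≤ n+1` and `w i ≤ w j`,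
where `w` is extended by fixing the last point. -/
def Ninvs {n : ℕ} (w : Equiv.Perm (Fin n)) : Finset (Fin n × Fin (n + 1)) :=
  Finset.univ.filter (fun p => (p.1 : ℕ) ≤ (p.2 : ℕ) ∧ (w p.1 : ℕ) ≤ wval w p.2)

/-- The set of Lehmer codes of elements of the weak order interval `Λ_w = [id, w]`. -/
def codeSet {n : ℕ} (w : Equiv.Perm (Fin n)) : Set (Fin n → ℕ) :=
  {x | ∃ v : Equiv.Perm (Fin n), leftWeak v w ∧ lehmer v = x}

/-- The tuple `b_{i,x}(w)`: the `j`-th coordinate is `0` if `j < i` or `(i,j) ∈ inv(w)`,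
and is `max {0, x - m_{i,j}(w)}` (truncated subtraction) if `j ≥ i` and `(i,j) ∈ ninv(w)`. -/
def bmin {n : ℕ} (w : Equiv.Perm (Fin n)) (i : Fin n) (x : ℕ) : Fin n → ℕ :=
  fun j => if (i : ℕ) ≤ (j : ℕ) ∧ (w i : ℕ) ≤ (w j : ℕ) then x - mext w i j.castSucc else 0

/-- The set `M_w` of all `b_{i,x}(w)` for `1 ≤ x ≤ c_i(w)`. -/
def Mset {n : ℕ} (w : Equiv.Perm (Fin n)) : Set (Fin n → ℕ) :=
  {z | ∃ (i : Fin n) (x : ℕ), 1 ≤ x ∧ x ≤ lehmer w i ∧ z = bmin w i x}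

/-- The direct sum `v × w ∈ S_{m+n}` of permutations. -/
def dsum {m n : ℕ} (v : Equiv.Perm (Fin m)) (w : Equiv.Perm (Fin n)) :
    Equiv.Perm (Fin (m + n)) :=
  finSumFinEquiv.permCongr (Equiv.sumCongr v w)

section Aux
open Finset

lemma lehmer_eq {n : ℕ} (w : Equiv.Perm (Fin n)) (i : Fin n) :
    lehmer w i = (Finset.univ.filter (fun j : Fin n => i < j ∧ w j < w i)).card := by
  unfold lehmer Invs
  rw [Finset.filter_filter]
  refine Finset.card_bij' (fun p _ => p.2) (fun j _ => (i, j)) ?_ ?_ ?_ ?_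
  · intro p hp
    simp only [Finset.mem_filter, Finset.mem_univ, true_and] at hp ⊢
    obtain ⟨⟨h1, h2⟩, h3⟩ := hp
    subst h3; exact ⟨h1, h2⟩
  · intro j hj
    simp only [Finset.mem_filter, Finset.mem_univ, true_and] at hj ⊢
    exact ⟨⟨hj.1, hj.2⟩, trivial⟩
  · intro p hp
    simp only [Finset.mem_filter, Finset.mem_univ, true_and] at hp
    exact Prod.ext hp.2.symm rfl
  · intro j hj; rfl

def insF {n : ℕ} (p : Fin (n+1)) (e : Equiv.Perm (Fin n)) : Fin (n+1) → Fin (n+1) :=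
  Fin.cases p (fun i => p.succAbove (e i))

lemma insF_inj {n : ℕ} (p : Fin (n+1)) (e : Equiv.Perm (Fin n)) :
    Function.Injective (insF p e) := by
  intro a b h
  induction a using Fin.cases with
  | zero =>
    induction b using Fin.cases with
    | zero => rfl
    | succ j =>
      simp only [insF, Fin.cases_zero, Fin.cases_succ] at h
      exact absurd h.symm (Fin.succAbove_ne p (e j))
  | succ i =>
    induction b using Fin.cases with
    | zero =>
      simp only [insF, Fin.cases_zero, Fin.cases_succ] at h
      exact absurd h (Fin.succAbove_ne p (e i))
    | succ j =>
      simp only [insF, Fin.cases_succ] at h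
      have := e.injective (Fin.succAbove_right_injective h)
      rw [this]

noncomputable def ins {n : ℕ} (p : Fin (n+1)) (e : Equiv.Perm (Fin n)) : Equiv.Perm (Fin (n+1)) :=
  Equiv.ofBijective (insF p e) (Finite.injective_iff_bijective.mp (insF_inj p e))

@[simp] lemma ins_zero {n : ℕ} (p : Fin (n+1)) (e : Equiv.Perm (Fin n)) :
    ins p e 0 = p := rfl

@[simp] lemma ins_succ {n : ℕ} (p : Fin (n+1)) (e : Equiv.Perm (Fin n)) (i : Fin n) :
    ins p e i.succ = p.succAbove (e i) := rfl

lemma exists_ins {n : ℕ} (u : Equiv.Perm (Fin (n+1))) :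
    ∃ (p : Fin (n+1)) (e : Equiv.Perm (Fin n)), u = ins p e := by
  have hne : ∀ i : Fin n, u i.succ ≠ u 0 := fun i h =>
    Fin.succ_ne_zero i (u.injective h)
  choose f hf using fun i => Fin.exists_succAbove_eq (hne i)
  have finj : Function.Injective f := by
    intro i j h
    have : u i.succ = u j.succ := by rw [← hf i, ← hf j, h]
    exact Fin.succ_injective _ (u.injective this)
  refine ⟨u 0, Equiv.ofBijective f (Finite.injective_iff_bijective.mp finj), ?_⟩
  apply Equiv.ext
  intro x
  induction x using Fin.cases with
  | zero => rfl
  | succ i => exact (hf i).symm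

end Aux


section Aux
open Finset

lemma succAbove_val {n : ℕ} (q : Fin (n+1)) (x : Fin n) :
    ((q.succAbove x : Fin (n+1)) : ℕ) = if (x:ℕ) < (q:ℕ) then (x:ℕ) else (x:ℕ)+1 := by
  unfold Fin.succAbove
  split_ifs with h1 h2 h2 <;> simp_all [Fin.lt_def]

lemma val_min' {n : ℕ} (p q : Fin (n+1)) : ((min p q : Fin (n+1)) : ℕ) = min (p:ℕ) (q:ℕ) := by
  rcases le_total p q with h | h
  · rw [min_eq_left h, min_eq_left (Fin.le_def.mp h)]
  · rw [min_eq_right h, min_eq_right (Fin.le_def.mp h)]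

lemma succAbove_lt_self_iff {n : ℕ} (q : Fin (n+1)) (x : Fin n) :
    q.succAbove x < q ↔ (x:ℕ) < (q:ℕ) := by
  rw [Fin.lt_def, succAbove_val]; split_ifs <;> omega

lemma succAbove_lt_succAbove_iff' {n : ℕ} (q : Fin (n+1)) (x y : Fin n) :
    q.succAbove x < q.succAbove y ↔ x < y := by
  rw [Fin.lt_def, Fin.lt_def, succAbove_val, succAbove_val]
  split_ifs <;> omega

lemma min_succAbove_le {n : ℕ} (p₁ p₂ : Fin (n+1)) (b c a : Fin n)
    (h : min (b:ℕ) (c:ℕ) ≤ (a:ℕ)) :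
    min ((p₁.succAbove b : Fin (n+1)):ℕ) ((p₂.succAbove c : Fin (n+1)):ℕ)
      ≤ (((min p₁ p₂).succAbove a : Fin (n+1)):ℕ) := by
  rw [succAbove_val, succAbove_val, succAbove_val, val_min']
  split_ifs <;> omega

end Aux

section Count
open Finset

lemma card_comp_equiv {n : ℕ} (e : Equiv.Perm (Fin n)) (P : Fin n → Prop) [DecidablePred P] :
    (Finset.univ.filter (fun k => P (e k))).card = (Finset.univ.filter P).card := by
  refine Finset.card_bij (fun k _ => e k) ?_ ?_ ?_
  · intro k hk; simp only [mem_filter, mem_univ, true_and] at hk ⊢; exact hk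
  · intro a _ b _ h; exact e.injective h
  · intro b hb
    simp only [mem_filter, mem_univ, true_and] at hb
    exact ⟨e.symm b, by simp [hb], by simp⟩

lemma card_filter_val_lt {n m : ℕ} (h : m ≤ n) :
    (Finset.univ.filter (fun x : Fin n => (x:ℕ) < m)).card = m := by
  have : (Finset.univ.filter (fun x : Fin n => (x:ℕ) < m)).card
      = (Finset.univ : Finset (Fin m)).card := by
    refine Finset.card_bij (fun x hx => ⟨(x:ℕ), (Finset.mem_filter.mp hx).2⟩) ?_ ?_ ?_
    · intro x hx; exact Finset.mem_univ _
    · intro a ha b hb hab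
      simp only [Fin.mk.injEq] at hab
      exact Fin.ext hab

    · intro y _
      refine ⟨⟨(y:ℕ), lt_of_lt_of_le y.isLt h⟩, ?_, rfl⟩
      simp [y.isLt]
  rw [this, Finset.card_univ, Fintype.card_fin]

lemma lehmer_ins_zero {n : ℕ} (p : Fin (n+1)) (e : Equiv.Perm (Fin n)) :
    lehmer (ins p e) 0 = (p : ℕ) := by
  rw [lehmer_eq]
  have h1 : (Finset.univ.filter (fun j : Fin (n+1) => 0 < j ∧ ins p e j < ins p e 0)).card
      = (Finset.univ.filter (fun k : Fin n => (e k : ℕ) < (p:ℕ))).card := by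
    refine (Finset.card_bij (fun k _ => k.succ) ?_ ?_ ?_).symm
    · intro k hk
      simp only [mem_filter, mem_univ, true_and] at hk ⊢
      exact ⟨Fin.succ_pos k, by rw [ins_succ, ins_zero]; exact (succAbove_lt_self_iff p (e k)).mpr hk⟩
    · intro a _ b _ h; exact Fin.succ_injective _ h
    · intro j hj
      simp only [mem_filter, mem_univ, true_and] at hj
      obtain ⟨k, rfl⟩ : ∃ k : Fin n, j = k.succ := by
        rcases Fin.eq_zero_or_eq_succ j with rfl | ⟨k, rfl⟩
        · exact absurd hj.1 (lt_irrefl _)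
        · exact ⟨k, rfl⟩
      refine ⟨k, ?_, rfl⟩
      have := hj.2
      rw [ins_succ, ins_zero] at this
      simp only [mem_filter, mem_univ, true_and]
      exact (succAbove_lt_self_iff p (e k)).mp this
  rw [h1, card_comp_equiv e (fun x : Fin n => (x:ℕ) < (p:ℕ)), card_filter_val_lt (Nat.lt_succ_iff.mp p.isLt)]

lemma lehmer_ins_succ {n : ℕ} (p : Fin (n+1)) (e : Equiv.Perm (Fin n)) (i : Fin n) :
    lehmer (ins p e) i.succ = lehmer e i := by
  rw [lehmer_eq, lehmer_eq]
  refine (Finset.card_bij (fun k _ => k.succ) ?_ ?_ ?_).symm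
  · intro k hk
    simp only [mem_filter, mem_univ, true_and] at hk ⊢
    refine ⟨Fin.succ_lt_succ_iff.mpr hk.1, ?_⟩
    rw [ins_succ, ins_succ]
    exact (succAbove_lt_succAbove_iff' p (e k) (e i)).mpr hk.2
  · intro a _ b _ h; exact Fin.succ_injective _ h
  · intro j hj
    simp only [mem_filter, mem_univ, true_and] at hj
    obtain ⟨k, rfl⟩ : ∃ k : Fin n, j = k.succ := by
      rcases Fin.eq_zero_or_eq_succ j with rfl | ⟨k, rfl⟩
      · exact absurd hj.1 (Fin.not_lt_zero _)
      · exact ⟨k, rfl⟩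
    refine ⟨k, ?_, rfl⟩
    have h2 := hj.2
    rw [ins_succ, ins_succ] at h2
    simp only [mem_filter, mem_univ, true_and]
    exact ⟨Fin.succ_lt_succ_iff.mp hj.1, (succAbove_lt_succAbove_iff' p (e k) (e i)).mp h2⟩

end Count
lemma main_aux : ∀ (n : ℕ) (u₁ u₂ : Equiv.Perm (Fin n)), ∃ v : Equiv.Perm (Fin n),
    (∀ i, lehmer v i = min (lehmer u₁ i) (lehmer u₂ i)) ∧
    (∀ j, min ((u₁ j : ℕ)) ((u₂ j : ℕ)) ≤ (v j : ℕ)) ∧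
    (∀ i j : Fin n, i < j → v j < v i → u₁ j < u₁ i ∨ u₂ j < u₂ i) := by
  intro n
  induction n with
  | zero =>
    intro u₁ u₂
    exact ⟨1, fun i => i.elim0, fun j => j.elim0, fun i j => i.elim0⟩
  | succ n IH =>
    intro u₁ u₂
    obtain ⟨p₁, e₁, rfl⟩ := exists_ins u₁
    obtain ⟨p₂, e₂, rfl⟩ := exists_ins u₂
    obtain ⟨v', hl, hc, hu⟩ := IH e₁ e₂
    have hC : ∀ j : Fin (n+1),
        min ((ins p₁ e₁ j : ℕ)) ((ins p₂ e₂ j : ℕ)) ≤ ((ins (min p₁ p₂) v' j : ℕ)) := by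
      intro j
      rcases Fin.eq_zero_or_eq_succ j with rfl | ⟨k, rfl⟩
      · rw [ins_zero, ins_zero, ins_zero]
        exact (val_min' p₁ p₂).ge
      · rw [ins_succ, ins_succ, ins_succ]
        exact min_succAbove_le p₁ p₂ (e₁ k) (e₂ k) (v' k) (hc k)
    refine ⟨ins (min p₁ p₂) v', ?_, hC, ?_⟩
    · intro i
      rcases Fin.eq_zero_or_eq_succ i with rfl | ⟨k, rfl⟩
      · rw [lehmer_ins_zero, lehmer_ins_zero, lehmer_ins_zero, val_min']
      · rw [lehmer_ins_succ, lehmer_ins_succ, lehmer_ins_succ, hl k]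
    · intro i j hij hv
      rcases Fin.eq_zero_or_eq_succ j with rfl | ⟨m, rfl⟩
      · exact absurd hij (Fin.not_lt_zero _)
      rcases Fin.eq_zero_or_eq_succ i with rfl | ⟨k, rfl⟩
      · rw [ins_zero] at hv
        have hvn : ((ins (min p₁ p₂) v' m.succ : ℕ)) < ((min p₁ p₂ : Fin (n+1)) : ℕ) :=
          Fin.lt_def.mp hv
        rw [val_min'] at hvn
        have hm : min ((ins p₁ e₁ m.succ : ℕ)) ((ins p₂ e₂ m.succ : ℕ)) < min (p₁:ℕ) (p₂:ℕ) :=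
          lt_of_le_of_lt (hC m.succ) hvn
        rcases le_total ((ins p₁ e₁ m.succ : ℕ)) ((ins p₂ e₂ m.succ : ℕ)) with h | h
        · left
          rw [ins_zero, Fin.lt_def]
          omega
        · right
          rw [ins_zero, Fin.lt_def]
          omega
      · rw [ins_succ, ins_succ] at hv
        have hv' : v' m < v' k := (succAbove_lt_succAbove_iff' _ _ _).mp hv
        have hk : k < m := Fin.succ_lt_succ_iff.mp hij
        rcases hu k m hk hv' with h | h
        · left; rw [ins_succ, ins_succ]
          exact (succAbove_lt_succAbove_iff' p₁ _ _).mpr h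
        · right; rw [ins_succ, ins_succ]
          exact (succAbove_lt_succAbove_iff' p₂ _ _).mpr h



/-- Lemma 3.1 (meet half): if `u₁ ≤_L w` and `u₂ ≤_L w`, then there is `v ≤_L w` whose
Lehmer code is the coordinatewise minimum `c(u₁) ⊓ c(u₂)`; i.e. `c(Λ_w)` is closed under
the meet of `ℕ^n`. -/
theorem codeSet_meet_closed {n : ℕ} (w u₁ u₂ : Equiv.Perm (Fin n))
    (h₁ : leftWeak u₁ w) (h₂ : leftWeak u₂ w) :
    ∃ v : Equiv.Perm (Fin n), leftWeak v w ∧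
      lehmer v = (fun i => min (lehmer u₁ i) (lehmer u₂ i)) := by
  obtain ⟨v, hl, -, hu⟩ := main_aux n u₁ u₂
  refine ⟨v, ?_, funext hl⟩
  intro q hq
  simp only [Invs, Finset.mem_filter, Finset.mem_univ, true_and] at hq
  rcases hu q.1 q.2 hq.1 hq.2 with h | h
  · exact h₁ (by simp only [Invs, Finset.mem_filter, Finset.mem_univ, true_and]; exact ⟨hq.1, h⟩)
  · exact h₂ (by simp only [Invs, Finset.mem_filter, Finset.mem_univ, true_and]; exact ⟨hq.1, h⟩)
end

section
/- Let w ∈ S_n and let x, y ∈ c(Λ_w). If y covers x in the subposet (c(Λ_w), product order) — that is, x < y and there is no z ∈ c(Λ_w) with x < z < y — then Σ_{i=1}^n y_i = Σ_{i=1}^n x_i + 1. Consequently (c(Λ_w), product order) is a ranked poset whose rank function is the coordinate sum, and its rank-generating function equals that of the weak order interval Λ_w: for every k, |{v ∈ S_n : v ≤_L w, ℓ(v) = k}| = |{x ∈ c(Λ_w) : Σ_{i=1}^n x_i = k}|. -/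
open Finset

variable {n : ℕ}

lemma mem_Invs {u : Equiv.Perm (Fin n)} {p : Fin n × Fin n} :
    p ∈ Invs u ↔ p.1 < p.2 ∧ u p.2 < u p.1 := by
  simp [Invs]

lemma lehmer_eq_card (u : Equiv.Perm (Fin n)) (i : Fin n) :
    lehmer u i = (univ.filter fun k => i < k ∧ u k < u i).card := by
  unfold lehmer
  have h : (Invs u).filter (fun p => p.1 = i)
      = (univ.filter fun k => i < k ∧ u k < u i).image (fun k => (i, k)) := by
    ext p
    simp only [mem_filter, mem_image, mem_univ, true_and, mem_Invs]
    constructor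
    · rintro ⟨⟨h1, h2⟩, h3⟩
      exact ⟨p.2, ⟨h3 ▸ h1, h3 ▸ h2⟩, by rw [← h3]⟩
    · rintro ⟨k, ⟨h1, h2⟩, rfl⟩
      exact ⟨⟨h1, h2⟩, rfl⟩
  rw [h, Finset.card_image_of_injective _ (fun a b hab => (Prod.mk.injEq _ _ _ _).mp hab |>.2)]

lemma sum_lehmer (u : Equiv.Perm (Fin n)) : ∑ i, lehmer u i = len u := by
  unfold len lehmer
  exact (Finset.card_eq_sum_card_fiberwise
    (f := fun p : Fin n × Fin n => p.1) (s := Invs u) (t := univ) (fun x _ => mem_univ _)).symm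

lemma rank_le_iff (u : Equiv.Perm (Fin n)) (a k : Fin n) (hk : a < k) :
    u k < u a ↔ (univ.filter fun t => a < t ∧ u t ≤ u k).card ≤ lehmer u a := by
  rw [lehmer_eq_card]
  constructor
  · intro h
    apply Finset.card_le_card
    intro t ht
    simp only [mem_filter, mem_univ, true_and] at ht ⊢
    exact ⟨ht.1, lt_of_le_of_lt ht.2 h⟩
  · intro h
    by_contra hno
    have hne : u a ≠ u k := u.injective.ne hk.ne
    have hak : u a < u k := lt_of_le_of_ne (le_of_not_gt hno) hne
    have hsub : insert k (univ.filter fun t => a < t ∧ u t < u a)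
        ⊆ (univ.filter fun t => a < t ∧ u t ≤ u k) := by
      intro t ht
      simp only [mem_insert, mem_filter, mem_univ, true_and] at ht ⊢
      rcases ht with rfl | ⟨h1, h2⟩
      · exact ⟨hk, le_refl _⟩
      · exact ⟨h1, le_of_lt (h2.trans hak)⟩
    have hkn : k ∉ (univ.filter fun t => a < t ∧ u t < u a) := by
      simp only [mem_filter, mem_univ, true_and, not_and]
      intro _
      exact not_lt_of_gt hak
    have := Finset.card_le_card hsub
    rw [Finset.card_insert_of_notMem hkn] at this
    omega

lemma pattern (u v : Equiv.Perm (Fin n)) (m : ℕ)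
    (h : ∀ k : Fin n, m ≤ (k : ℕ) → lehmer u k = lehmer v k) :
    ∀ k l : Fin n, m ≤ (k : ℕ) → k < l → (u k < u l ↔ v k < v l) := by
  suffices H : ∀ d : ℕ, ∀ k l : Fin n, n - (k : ℕ) ≤ d → m ≤ (k : ℕ) → k < l →
      (u k < u l ↔ v k < v l) by
    intro k l hm hkl; exact H n k l (by omega) hm hkl
  intro d
  induction d with
  | zero =>
    intro k l hd _ hkl
    exact absurd hd (by have := k.isLt; omega)
  | succ d ih =>
    intro k l hd hm hkl
    have hUV : ∀ t : Fin n, k < t → (u t ≤ u l ↔ v t ≤ v l) := by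
      intro t hkt
      have hmt : m ≤ (t : ℕ) := le_trans hm (le_of_lt hkt)
      have hdt : n - (t : ℕ) ≤ d := by
        have h1 : (k : ℕ) < (t : ℕ) := hkt
        omega
      rcases lt_trichotomy t l with htl | rfl | hlt'
      · have hp := ih t l hdt hmt htl
        constructor
        · intro h'
          rcases lt_or_eq_of_le h' with h'' | h''
          · exact le_of_lt (hp.mp h'')
          · exact le_of_eq (by rw [u.injective h''])
        · intro h'
          rcases lt_or_eq_of_le h' with h'' | h''
          · exact le_of_lt (hp.mpr h'')
          · exact le_of_eq (by rw [v.injective h''])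
      · simp
      · have hml : m ≤ (l : ℕ) := le_trans hm (le_of_lt hkl)
        have hdl : n - (l : ℕ) ≤ d := by
          have h1 : (k : ℕ) < (l : ℕ) := hkl
          omega
        have hp := ih l t hdl hml hlt'
        have hne1 : u l ≠ u t := u.injective.ne hlt'.ne
        have hne2 : v l ≠ v t := v.injective.ne hlt'.ne
        constructor
        · intro h'
          exact not_lt.mp (fun hh => (not_lt.mpr h') (hp.mpr hh))
        · intro h'
          exact not_lt.mp (fun hh => (not_lt.mpr h') (hp.mp hh))
    -- now the main step
    have hsets : (univ.filter fun t => k < t ∧ u t ≤ u l)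
        = (univ.filter fun t => k < t ∧ v t ≤ v l) := by
      ext t
      simp only [mem_filter, mem_univ, true_and]
      constructor
      · rintro ⟨h1, h2⟩; exact ⟨h1, (hUV t h1).mp h2⟩
      · rintro ⟨h1, h2⟩; exact ⟨h1, (hUV t h1).mpr h2⟩
    have h1 := rank_le_iff u k l hkl
    have h2 := rank_le_iff v k l hkl
    rw [hsets, h k hm] at h1
    have hiff : u l < u k ↔ v l < v k := h1.trans h2.symm
    have hne1 : u k ≠ u l := u.injective.ne hkl.ne
    have hne2 : v k ≠ v l := v.injective.ne hkl.ne
    constructor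
    · intro h'
      rcases lt_or_gt_of_ne hne2 with hh | hh
      · exact hh
      · exact absurd (hiff.mpr hh) (not_lt.mpr (le_of_lt h'))
    · intro h'
      rcases lt_or_gt_of_ne hne1 with hh | hh
      · exact hh
      · exact absurd (hiff.mp hh) (not_lt.mpr (le_of_lt h'))

lemma val_eq_card (u : Equiv.Perm (Fin n)) (k : Fin n) :
    ((u k : ℕ)) = (univ.filter fun l => u l < u k).card := by
  have : (univ.filter fun l => u l < u k).card = (Finset.Iio (u k)).card := by
    apply Finset.card_bij (fun l _ => u l)
    · intro l hl
      simp only [mem_filter, mem_univ, true_and] at hl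
      exact Finset.mem_Iio.mpr hl
    · intro l₁ h₁ l₂ h₂ hh
      exact u.injective hh
    · intro m hm
      refine ⟨u.symm m, ?_, by simp⟩
      simp only [mem_filter, mem_univ, true_and, Equiv.apply_symm_apply]
      exact Finset.mem_Iio.mp hm
  rw [this, Fin.card_Iio]

lemma lehmer_injective : Function.Injective (lehmer (n := n)) := by
  intro u v h
  have hp := pattern u v 0 (fun k _ => congrFun h k)
  apply Equiv.ext
  intro k
  have hsets : (univ.filter fun l => u l < u k) = (univ.filter fun l => v l < v k) := by
    ext l
    simp only [mem_filter, mem_univ, true_and]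
    rcases lt_trichotomy l k with hlk | rfl | hkl
    · exact hp l k (Nat.zero_le _) hlk
    · simp
    · have h2 := hp k l (Nat.zero_le _) hkl
      constructor
      · intro h'
        exact not_lt.mp (fun hh => (not_lt.mpr (le_of_lt h')) (h2.mpr hh)) |>.lt_of_ne
          (v.injective.ne hkl.ne')
      · intro h'
        exact not_lt.mp (fun hh => (not_lt.mpr (le_of_lt h')) (h2.mp hh)) |>.lt_of_ne
          (u.injective.ne hkl.ne')
  have : ((u k : ℕ)) = ((v k : ℕ)) := by
    rw [val_eq_card u k, hsets, ← val_eq_card v k]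
  exact Fin.ext this

lemma mk_invs {u : Equiv.Perm (Fin n)} {i k : Fin n} (h1 : i < k) (h2 : u k < u i) :
    ((i, k) : Fin n × Fin n) ∈ Invs u := mem_Invs.mpr ⟨h1, h2⟩

lemma invs_lt {u : Equiv.Perm (Fin n)} {i k : Fin n}
    (h : ((i, k) : Fin n × Fin n) ∈ Invs u) : u k < u i := (mem_Invs.mp h).2

lemma key (w u v : Equiv.Perm (Fin n)) (hu : leftWeak u w) (hv : leftWeak v w) (a : Fin n)
    (hc : ∀ i : Fin n, a < i → lehmer u i = lehmer v i) (hlt : lehmer u a < lehmer v a) :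
    ∃ u' : Equiv.Perm (Fin n), leftWeak u' w ∧ lehmer u' a = lehmer u a + 1 ∧
      ∀ i : Fin n, i ≠ a → lehmer u' i = lehmer u i := by
  classical
  -- T is nonempty
  have hTne : (univ.filter fun k => a < k ∧ u a < u k).Nonempty := by
    rw [Finset.filter_nonempty_iff]
    by_contra hne
    push_neg at hne
    have hall : ∀ k, a < k → u k < u a := by
      intro k hk
      exact lt_of_le_of_ne (hne k (mem_univ k) hk) (u.injective.ne hk.ne')
    have h1 : lehmer u a = (univ.filter fun k => a < k).card := by
      rw [lehmer_eq_card]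
      congr 1
      ext k
      simp only [mem_filter, mem_univ, true_and, and_iff_left_iff_imp]
      exact hall k
    have h2 : lehmer v a ≤ (univ.filter fun k => a < k).card := by
      rw [lehmer_eq_card]
      apply Finset.card_le_card
      intro k hk
      simp only [mem_filter, mem_univ, true_and] at hk ⊢
      exact hk.1
    omega
  obtain ⟨b, hbT, hmin⟩ := Finset.exists_min_image _ u hTne
  simp only [mem_filter, mem_univ, true_and] at hbT
  obtain ⟨hab, hpq⟩ := hbT
  have hq : ∀ k, a < k → k ≠ b → u a < u k → u b < u k := by
    intro k h1 h2 h3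
    have hle : u b ≤ u k := hmin k (by simp only [mem_filter, mem_univ, true_and]; exact ⟨h1, h3⟩)
    exact lt_of_le_of_ne hle (u.injective.ne (Ne.symm h2))
  have hE : ∀ k, a < k → k ≠ b → (u k < u b ↔ u k < u a) := by
    intro k h1 h2
    constructor
    · intro h3
      by_contra h4
      have h5 : u a < u k := lt_of_le_of_ne (not_lt.mp h4) (u.injective.ne h1.ne').symm
      exact absurd h3 (not_lt.mpr (le_of_lt (hq k h1 h2 h5)))
    · intro h3
      exact h3.trans hpq
  -- pattern for indices > a
  have hpat : ∀ k l : Fin n, a < k → k < l → (u k < u l ↔ v k < v l) := by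
    have := pattern u v ((a : ℕ) + 1) (fun k hk => hc k (by exact Fin.lt_def.mpr hk))
    intro k l h1 h2
    exact this k l (Fin.lt_def.mp h1) h2
  -- F0 : rank sets agree
  have F0 : ∀ k : Fin n, a < k → (univ.filter fun t => a < t ∧ u t ≤ u k)
      = (univ.filter fun t => a < t ∧ v t ≤ v k) := by
    intro k hk
    ext t
    simp only [mem_filter, mem_univ, true_and]
    have hiff : a < t → (u t ≤ u k ↔ v t ≤ v k) := by
      intro hat
      rcases lt_trichotomy t k with htk | rfl | hkt
      · have hp := hpat t k hat htk
        constructor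
        · intro h'
          exact le_of_lt (hp.mp (lt_of_le_of_ne h' (u.injective.ne htk.ne)))
        · intro h'
          exact le_of_lt (hp.mpr (lt_of_le_of_ne h' (v.injective.ne htk.ne)))
      · simp
      · have hp := hpat k t hk hkt
        constructor
        · intro h'
          exact not_lt.mp (fun hh => (not_lt.mpr h') (hp.mpr hh))
        · intro h'
          exact not_lt.mp (fun hh => (not_lt.mpr h') (hp.mp hh))
    constructor
    · rintro ⟨h1, h2⟩; exact ⟨h1, (hiff h1).mp h2⟩
    · rintro ⟨h1, h2⟩; exact ⟨h1, (hiff h1).mpr h2⟩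
  -- F2 : the rank set of b
  have F2 : (univ.filter fun t => a < t ∧ u t ≤ u b)
      = insert b (univ.filter fun t => a < t ∧ u t < u a) := by
    ext t
    simp only [mem_filter, mem_univ, true_and, mem_insert]
    constructor
    · rintro ⟨h1, h2⟩
      by_cases htb : t = b
      · exact Or.inl htb
      · exact Or.inr ⟨h1, (hE t h1 htb).mp (lt_of_le_of_ne h2 (u.injective.ne htb))⟩
    · rintro (rfl | ⟨h1, h2⟩)
      · exact ⟨hab, le_refl _⟩
      · exact ⟨h1, le_of_lt (h2.trans hpq)⟩
  have hbnotmem : b ∉ (univ.filter fun t => a < t ∧ u t < u a) := by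
    simp only [mem_filter, mem_univ, true_and, not_and]
    intro _
    exact not_lt.mpr (le_of_lt hpq)
  have hcardF2 : (univ.filter fun t => a < t ∧ u t ≤ u b).card = lehmer u a + 1 := by
    rw [F2, Finset.card_insert_of_notMem hbnotmem, lehmer_eq_card]
  -- b contributes to v's row a
  have hvb : v b < v a := by
    rw [rank_le_iff v a b hab, ← F0 b hab, hcardF2]
    omega
  -- elements of A are in B
  have hAB : ∀ k, a < k → u k < u a → v k < v a := by
    intro k h1 h2
    rw [rank_le_iff v a k h1, ← F0 k h1]
    calc (univ.filter fun t => a < t ∧ u t ≤ u k).card ≤ lehmer u a :=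
          (rank_le_iff u a k h1).mp h2
      _ ≤ lehmer v a := le_of_lt hlt
  -- the step inequality
  have hstep : (univ.filter fun k => a < k ∧ k < b ∧ u k < u a).card + 1
      ≤ (univ.filter fun k => a < k ∧ k ≤ b ∧ v k < v a).card := by
    have hins : insert b (univ.filter fun k => a < k ∧ k < b ∧ u k < u a)
        ⊆ (univ.filter fun k => a < k ∧ k ≤ b ∧ v k < v a) := by
      intro k hk
      simp only [mem_insert, mem_filter, mem_univ, true_and] at hk ⊢
      rcases hk with rfl | ⟨h1, h2, h3⟩
      · exact ⟨hab, le_refl _, hvb⟩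
      · exact ⟨h1, le_of_lt h2, hAB k h1 h3⟩
    have hbA : b ∉ (univ.filter fun k => a < k ∧ k < b ∧ u k < u a) := by
      simp only [mem_filter, mem_univ, true_and, not_and]
      intro _ h
      exact absurd h (lt_irrefl b)
    calc (univ.filter fun k => a < k ∧ k < b ∧ u k < u a).card + 1
        = (insert b (univ.filter fun k => a < k ∧ k < b ∧ u k < u a)).card := by
          rw [Finset.card_insert_of_notMem hbA]
      _ ≤ _ := Finset.card_le_card hins
  -- G : (a, b) ∈ Invs w
  have hG : ((a, b) : Fin n × Fin n) ∈ Invs w := by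
    by_contra hG
    rw [mem_Invs] at hG
    push_neg at hG
    have hwab : w a < w b := lt_of_le_of_ne (hG hab) (w.injective.ne hab.ne)
    have hBC : (univ.filter fun k => a < k ∧ k ≤ b ∧ v k < v a)
        ⊆ (univ.filter fun k => a < k ∧ k < b ∧ w k < w a) := by
      intro k hk
      simp only [mem_filter, mem_univ, true_and] at hk ⊢
      obtain ⟨h1, h2, h3⟩ := hk
      have hw : w k < w a := invs_lt (hv (mk_invs h1 h3))
      refine ⟨h1, ?_, hw⟩
      rcases lt_or_eq_of_le h2 with h4 | rfl
      · exact h4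
      · exact absurd hw (not_lt.mpr (le_of_lt hwab))
    have hnsub : ¬ (univ.filter fun k => a < k ∧ k < b ∧ w k < w a)
        ⊆ (univ.filter fun k => a < k ∧ k < b ∧ u k < u a) := by
      intro hsub
      have h1 := Finset.card_le_card hsub
      have h2 := Finset.card_le_card hBC
      omega
    obtain ⟨l, hlC, hlA⟩ := Finset.not_subset.mp hnsub
    simp only [mem_filter, mem_univ, true_and] at hlC hlA
    obtain ⟨h1, h2, h3⟩ := hlC
    push_neg at hlA
    have h4 : u a ≤ u l := hlA h1 h2
    have h5 : u a < u l := lt_of_le_of_ne h4 (u.injective.ne h1.ne').symm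
    have h6 : u b < u l := hq l h1 h2.ne h5
    have h7 : w b < w l := invs_lt (hu (mk_invs h2 h6))
    exact absurd (h7.trans (h3.trans hwab)) (lt_irrefl _)
  have hwba : w b < w a := (mem_Invs.mp hG).2
  -- the new permutation
  set u' : Equiv.Perm (Fin n) := u * Equiv.swap a b with hu'def
  have hu'a : u' a = u b := by
    simp [hu'def, Equiv.Perm.mul_apply, Equiv.swap_apply_left]
  have hu'b : u' b = u a := by
    simp [hu'def, Equiv.Perm.mul_apply, Equiv.swap_apply_right]
  have hu'k : ∀ k, k ≠ a → k ≠ b → u' k = u k := by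
    intro k h1 h2
    simp [hu'def, Equiv.Perm.mul_apply, Equiv.swap_apply_of_ne_of_ne h1 h2]
  refine ⟨u', ?_, ?_, ?_⟩
  · -- Invs u' ⊆ Invs w
    intro p hp
    obtain ⟨i, k⟩ := p
    rw [mem_Invs] at hp ⊢
    obtain ⟨hik, hval⟩ := hp
    refine ⟨hik, ?_⟩
    by_cases hia : i = a
    · rw [hia] at hik hval ⊢
      by_cases hkb : k = b
      · rw [hkb]
        exact hwba
      · have hka : k ≠ a := hik.ne'
        rw [hu'k k hka hkb, hu'a] at hval
        have h2 : u k < u a := (hE k hik hkb).mp hval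
        exact invs_lt (hu (mk_invs hik h2))
    · by_cases hib : i = b
      · rw [hib] at hik hval ⊢
        have hka : k ≠ a := (hab.trans hik).ne'
        have hkb : k ≠ b := hik.ne'
        rw [hu'k k hka hkb, hu'b] at hval
        have h2 : u k < u b := hval.trans hpq
        exact invs_lt (hu (mk_invs hik h2))
      · rw [hu'k i hia hib] at hval
        by_cases hkb : k = b
        · rw [hkb] at hik hval ⊢
          rw [hu'b] at hval
          by_cases hai : a < i
          · have h6 : u b < u i := hq i hai hib hval
            exact invs_lt (hu (mk_invs hik h6))
          · have hia' : i < a := lt_of_le_of_ne (not_lt.mp hai) hia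
            have h7 : w a < w i := invs_lt (hu (mk_invs hia' hval))
            exact hwba.trans h7
        · by_cases hka : k = a
          · rw [hka] at hik hval ⊢
            rw [hu'a] at hval
            have h2 : u a < u i := hpq.trans hval
            exact invs_lt (hu (mk_invs hik h2))
          · rw [hu'k k hka hkb] at hval
            exact invs_lt (hu (mk_invs hik hval))
  · -- lehmer u' a = lehmer u a + 1
    rw [lehmer_eq_card, lehmer_eq_card]
    have hset : (univ.filter fun k => a < k ∧ u' k < u' a)
        = insert b (univ.filter fun k => a < k ∧ u k < u a) := by
      ext k
      simp only [mem_filter, mem_univ, true_and, mem_insert]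
      constructor
      · rintro ⟨h1, h2⟩
        by_cases hkb : k = b
        · exact Or.inl hkb
        · rw [hu'k k h1.ne' hkb, hu'a] at h2
          exact Or.inr ⟨h1, (hE k h1 hkb).mp h2⟩
      · rintro (rfl | ⟨h1, h2⟩)
        · refine ⟨hab, ?_⟩
          rw [hu'b, hu'a]
          exact hpq
        · refine ⟨h1, ?_⟩
          by_cases hkb : k = b
          · subst hkb
            exact absurd h2 (not_lt.mpr (le_of_lt hpq))
          · rw [hu'k k h1.ne' hkb, hu'a]
            exact h2.trans hpq
    rw [hset, Finset.card_insert_of_notMem hbnotmem]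
  · -- lehmer u' i = lehmer u i for i ≠ a
    intro i hia
    rw [lehmer_eq_card, lehmer_eq_card]
    by_cases hai : a < i
    · congr 1
      ext k
      simp only [mem_filter, mem_univ, true_and]
      have hiff : i < k → (u' k < u' i ↔ u k < u i) := by
        intro hik
        by_cases hib : i = b
        · rw [hib] at hik ⊢
          have hka : k ≠ a := (hab.trans hik).ne'
          have hkb : k ≠ b := hik.ne'
          rw [hu'k k hka hkb, hu'b]
          exact (hE k (hab.trans hik) hkb).symm
        · rw [hu'k i hia hib]
          by_cases hkb : k = b
          · rw [hkb]
            rw [hu'b]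
            constructor
            · intro h'
              exact hq i hai hib h'
            · intro h'
              exact hpq.trans h'
          · rw [hu'k k (hai.trans hik).ne' hkb]
      constructor
      · rintro ⟨h1, h2⟩; exact ⟨h1, (hiff h1).mp h2⟩
      · rintro ⟨h1, h2⟩; exact ⟨h1, (hiff h1).mpr h2⟩
    · have hia' : i < a := lt_of_le_of_ne (not_lt.mp hai) hia
      have hib' : i < b := hia'.trans hab
      have hu'i : u' i = u i := hu'k i hia hib'.ne
      have happ : ∀ k : Fin n, u' k = u (Equiv.swap a b k) := fun k => rfl
      have hswap : ∀ k : Fin n, i < k → i < Equiv.swap a b k := by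
        intro k hk
        rcases eq_or_ne k a with rfl | hka
        · rw [Equiv.swap_apply_left]; exact hib'
        · rcases eq_or_ne k b with rfl | hkb
          · rw [Equiv.swap_apply_right]; exact hia'
          · rw [Equiv.swap_apply_of_ne_of_ne hka hkb]; exact hk
      apply Finset.card_bij' (fun k _ => Equiv.swap a b k) (fun k _ => Equiv.swap a b k)
      · intro k hk
        simp only [mem_filter, mem_univ, true_and] at hk ⊢
        obtain ⟨h1, h2⟩ := hk
        rw [happ k, hu'i] at h2
        exact ⟨hswap k h1, h2⟩
      · intro k hk
        simp only [mem_filter, mem_univ, true_and] at hk ⊢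
        obtain ⟨h1, h2⟩ := hk
        refine ⟨hswap k h1, ?_⟩
        rw [happ (Equiv.swap a b k), Equiv.swap_apply_self, hu'i]
        exact h2
      · intro k _; exact Equiv.swap_apply_self a b k
      · intro k _; exact Equiv.swap_apply_self a b k

/-- Theorem 3.3: in the subposet `(c(Λ_w), ≤)` of `ℕ^n` (product order), every covering
relation increases the coordinate sum by exactly `1`; consequently `c(Λ_w)` is ranked by
the coordinate sum and its rank-generating function equals that of the weak order
interval `Λ_w`: for every `k`, the number of `v ≤_L w` with `ℓ(v) = k` equals the number
of codes `x ∈ c(Λ_w)` with coordinate sum `k`. -/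
theorem codeSet_rank {n : ℕ} (w : Equiv.Perm (Fin n)) :
    (∀ x y : Fin n → ℕ, x ∈ codeSet w → y ∈ codeSet w → x < y →
      (¬ ∃ z ∈ codeSet w, x < z ∧ z < y) →
      ∑ i, y i = ∑ i, x i + 1) ∧
    (∀ k : ℕ,
      {v : Equiv.Perm (Fin n) | leftWeak v w ∧ len v = k}.ncard =
      {x : Fin n → ℕ | x ∈ codeSet w ∧ ∑ i, x i = k}.ncard) := by
  constructor
  · rintro x y ⟨u, hu, rfl⟩ ⟨v, hv, rfl⟩ hxy hcov
    have hle : lehmer u ≤ lehmer v := le_of_lt hxy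
    have hSne : (univ.filter fun i => lehmer u i < lehmer v i).Nonempty := by
      obtain ⟨hle', i, hi⟩ := Pi.lt_def.mp hxy
      exact ⟨i, by simp [hi]⟩
    set a := (univ.filter fun i => lehmer u i < lehmer v i).max' hSne with ha
    have haS := (univ.filter fun i => lehmer u i < lehmer v i).max'_mem hSne
    rw [← ha] at haS
    rw [mem_filter] at haS
    have hamax : ∀ i ∈ (univ.filter fun j => lehmer u j < lehmer v j), i ≤ a := by
      intro i hi
      rw [ha]
      exact Finset.le_max' _ i hi
    clear_value a
    have hxa : lehmer u a < lehmer v a := haS.2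
    have hagree : ∀ i, a < i → lehmer u i = lehmer v i := by
      intro i hi
      refine le_antisymm (hle i) (not_lt.mp fun h => ?_)
      have hmem : i ∈ (univ.filter fun j => lehmer u j < lehmer v j) := by
        simp only [mem_filter, mem_univ, true_and]; exact h
      exact absurd (hamax i hmem) (not_le.mpr hi)
    obtain ⟨u', hwu', hu'a, hu'i⟩ := key w u v hu hv a hagree hxa
    have hz : lehmer u' ∈ codeSet w := ⟨u', hwu', rfl⟩
    have hxz : lehmer u < lehmer u' := by
      rw [Pi.lt_def]
      constructor
      · intro i
        rcases eq_or_ne i a with rfl | h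
        · rw [hu'a]; exact Nat.le_succ _
        · rw [hu'i i h]
      · exact ⟨a, by rw [hu'a]; omega⟩
    have hzy : lehmer u' ≤ lehmer v := by
      intro i
      rcases eq_or_ne i a with rfl | h
      · rw [hu'a]; exact hxa
      · rw [hu'i i h]; exact hle i
    have hzeq : lehmer u' = lehmer v := by
      by_contra hne
      exact hcov ⟨lehmer u', hz, hxz, lt_of_le_of_ne hzy hne⟩
    rw [← hzeq]
    have hpt : ∀ i, lehmer u' i = lehmer u i + (if i = a then 1 else 0) := by
      intro i
      rcases eq_or_ne i a with rfl | h
      · rw [hu'a]; simp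
      · rw [hu'i i h]; simp [h]
    rw [Finset.sum_congr rfl (fun i _ => hpt i), Finset.sum_add_distrib]
    congr 1
    rw [Finset.sum_ite_eq' univ a (fun _ => (1 : ℕ))]
    simp
  · intro k
    have himg : {x : Fin n → ℕ | x ∈ codeSet w ∧ ∑ i, x i = k}
        = lehmer '' {v : Equiv.Perm (Fin n) | leftWeak v w ∧ len v = k} := by
      ext x
      simp only [Set.mem_setOf_eq, Set.mem_image]
      constructor
      · rintro ⟨⟨v', hv', rfl⟩, hsum⟩
        exact ⟨v', ⟨hv', by rw [← sum_lehmer]; exact hsum⟩, rfl⟩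
      · rintro ⟨v', ⟨hv', hlen⟩, rfl⟩
        exact ⟨⟨v', hv', rfl⟩, by rw [sum_lehmer]; exact hlen⟩
    rw [himg, Set.ncard_image_of_injective _ lehmer_injective]
end

section
/- Let w ∈ S_n, let 1 ≤ i ≤ n and 1 ≤ x ≤ c_i(w). Then for every y ∈ c(Λ_w) whose i-th coordinate equals x, one has b_{i,x}(w) ≤ y in the product order. Hence b_{i,x}(w) is the unique minimal element of c(Λ_w) with i-th coordinate equal to x. -/
namespace BminAux
open Finset

variable {n : ℕ}

def Sset (w : Equiv.Perm (Fin n)) (i : Fin n) : Finset (Fin n) :=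
  Finset.univ.filter (fun k => i < k ∧ w k < w i)

lemma mem_Sset {w : Equiv.Perm (Fin n)} {i k : Fin n} :
    k ∈ Sset w i ↔ i < k ∧ w k < w i := by simp [Sset]

def Mf (w : Equiv.Perm (Fin n)) (i : Fin n) (p : ℕ) : ℕ :=
  ((Sset w i).filter (fun k : Fin n => (k : ℕ) < p)).card

lemma mem_Invs {w : Equiv.Perm (Fin n)} {p : Fin n × Fin n} :
    p ∈ Invs w ↔ p.1 < p.2 ∧ w p.2 < w p.1 := by simp [Invs]

lemma lehmer_eq (w : Equiv.Perm (Fin n)) (i : Fin n) :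
    lehmer w i = (Sset w i).card := by
  unfold lehmer
  apply Finset.card_bij (fun p _ => p.2)
  · intro p hp
    simp only [Finset.mem_filter, mem_Invs] at hp
    obtain ⟨⟨h1, h2⟩, h3⟩ := hp
    subst h3
    exact mem_Sset.mpr ⟨h1, h2⟩
  · intro p hp q hq h
    simp only [Finset.mem_filter, mem_Invs] at hp hq
    exact Prod.ext (hp.2.trans hq.2.symm) h
  · intro k hk
    rw [mem_Sset] at hk
    exact ⟨(i, k), by simp [Finset.mem_filter, mem_Invs, hk.1, hk.2], rfl⟩

lemma mext_eq (w : Equiv.Perm (Fin n)) (i : Fin n) (j : Fin (n+1)) :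
    mext w i j = Mf w i (j : ℕ) := by
  unfold mext Mf
  apply Finset.card_bij (fun p _ => p.2)
  · intro p hp
    simp only [Finset.mem_filter, mem_Invs] at hp
    obtain ⟨⟨h1, h2⟩, h3, h4⟩ := hp
    subst h3
    simp only [Finset.mem_filter, mem_Sset]
    exact ⟨⟨h1, h2⟩, h4⟩
  · intro p hp q hq h
    simp only [Finset.mem_filter, mem_Invs] at hp hq
    exact Prod.ext (hp.2.1.trans hq.2.1.symm) h
  · intro k hk
    simp only [Finset.mem_filter, mem_Sset] at hk
    exact ⟨(i, k), by simp [Finset.mem_filter, mem_Invs, hk.1.1, hk.1.2, hk.2], rfl⟩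

lemma Mf_mono (w : Equiv.Perm (Fin n)) (i : Fin n) {p q : ℕ} (h : p ≤ q) :
    Mf w i p ≤ Mf w i q :=
  Finset.card_le_card (by
    intro k hk
    simp only [Finset.mem_filter] at *
    exact ⟨hk.1, lt_of_lt_of_le hk.2 h⟩)


/-- elements of a finset of `Fin n` strictly between `a` and `b` number at most `b - a - 1`. -/
lemma card_between (T : Finset (Fin n)) (a b : ℕ)
    (h : ∀ t ∈ T, a < (t : ℕ) ∧ (t : ℕ) < b) : T.card ≤ b - a - 1 := by
  have h1 : T.card = (T.image Fin.val).card :=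
    (Finset.card_image_of_injective T Fin.val_injective).symm
  rw [h1]
  have h2 : T.image Fin.val ⊆ Finset.Ioo a b := by
    intro t ht
    simp only [Finset.mem_image] at ht
    obtain ⟨u, hu, rfl⟩ := ht
    exact Finset.mem_Ioo.mpr (h u hu)
  calc (T.image Fin.val).card ≤ (Finset.Ioo a b).card := Finset.card_le_card h2
    _ = b - a - 1 := Nat.card_Ioo a b

lemma Mf_zero (w : Equiv.Perm (Fin n)) (i : Fin n) {p : ℕ} (hp : p ≤ (i : ℕ)) :
    Mf w i p = 0 := by
  unfold Mf
  rw [Finset.card_eq_zero, Finset.filter_eq_empty_iff]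
  intro k hk
  rw [mem_Sset] at hk
  have : (i : ℕ) < (k : ℕ) := hk.1
  omega

/-- For `p ∉ S` with `p ≤ q`, `M q ≤ M p + (q - p - 1)`. -/
lemma Mf_diff (w : Equiv.Perm (Fin n)) (i : Fin n) {p : Fin n} (hp : p ∉ Sset w i)
    {q : ℕ} (hq : (p : ℕ) ≤ q) : Mf w i q ≤ Mf w i (p : ℕ) + (q - (p : ℕ) - 1) := by
  classical
  have hsplit : ((Sset w i).filter (fun k : Fin n => (k : ℕ) < q)).card
      ≤ ((Sset w i).filter (fun k : Fin n => (k : ℕ) < (p : ℕ))).card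
        + ((Sset w i).filter (fun k : Fin n => (p : ℕ) ≤ (k : ℕ) ∧ (k : ℕ) < q)).card := by
    rw [← Finset.card_union_of_disjoint]
    · apply Finset.card_le_card
      intro k hk
      simp only [Finset.mem_filter, Finset.mem_union] at *
      rcases lt_or_ge (k : ℕ) (p : ℕ) with h | h
      · exact Or.inl ⟨hk.1, h⟩
      · exact Or.inr ⟨hk.1, h, hk.2⟩
    · rw [Finset.disjoint_filter]
      intro k _ hk1 hk2
      omega
  have hmid : ((Sset w i).filter (fun k : Fin n => (p : ℕ) ≤ (k : ℕ) ∧ (k : ℕ) < q)).card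
      ≤ q - (p : ℕ) - 1 := by
    apply card_between
    intro t ht
    simp only [Finset.mem_filter] at ht
    have : t ≠ p := by rintro rfl; exact hp ht.1
    have : (t : ℕ) ≠ (p : ℕ) := fun hc => this (Fin.val_injective hc)
    omega
  unfold Mf
  omega

/-- On `S`, `M` is strictly monotone. -/
lemma Mf_S_lt (w : Equiv.Perm (Fin n)) (i : Fin n) {s t : Fin n}
    (hs : s ∈ Sset w i) (hst : (s : ℕ) < (t : ℕ)) :
    Mf w i (s : ℕ) < Mf w i (t : ℕ) := by
  apply Finset.card_lt_card
  constructor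
  · intro k hk
    simp only [Finset.mem_filter] at *
    exact ⟨hk.1, by omega⟩
  · intro hsub
    have : s ∈ (Sset w i).filter (fun k : Fin n => (k : ℕ) < (t : ℕ)) := by
      simp only [Finset.mem_filter]; exact ⟨hs, hst⟩
    have := hsub this
    simp only [Finset.mem_filter] at this
    omega

/-- For `s ∈ S`, `M s < card S`. -/
lemma Mf_lt_card (w : Equiv.Perm (Fin n)) (i : Fin n) {s : Fin n} (hs : s ∈ Sset w i) :
    Mf w i (s : ℕ) < (Sset w i).card := by
  apply Finset.card_lt_card
  constructor
  · exact Finset.filter_subset _ _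
  · intro hsub
    have := hsub hs
    simp only [Finset.mem_filter] at this
    omega

/-- The set of the first `x` elements of `S` has cardinality `x`. -/
lemma card_A (w : Equiv.Perm (Fin n)) (i : Fin n) {x : ℕ} (hx : x ≤ (Sset w i).card) :
    ((Sset w i).filter (fun s : Fin n => Mf w i (s : ℕ) < x)).card = x := by
  classical
  have hinj : ∀ (s t : Fin n), s ∈ Sset w i → t ∈ Sset w i →
      Mf w i (s : ℕ) = Mf w i (t : ℕ) → s = t := by
    intro s t hs ht h
    by_contra hne
    have : (s : ℕ) ≠ (t : ℕ) := fun hc => hne (Fin.val_injective hc)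
    rcases lt_or_gt_of_ne this with hlt | hgt
    · have := Mf_S_lt w i hs hlt; omega
    · have := Mf_S_lt w i ht hgt; omega
  have hsurj := Finset.surj_on_of_inj_on_of_card_le
    (s := Sset w i) (t := Finset.range (Sset w i).card)
    (fun s _ => Mf w i (s : ℕ))
    (fun s hs => Finset.mem_range.mpr (Mf_lt_card w i hs))
    (fun s t hs ht h => hinj s t hs ht h)
    (by simp)
  conv_rhs => rw [← Finset.card_range x]
  refine Finset.card_bij (fun s _ => Mf w i (s : ℕ)) ?_ ?_ ?_
  · intro s hs
    simp only [Finset.mem_filter] at hs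
    exact Finset.mem_range.mpr hs.2
  · intro s hs t ht h
    simp only [Finset.mem_filter] at hs ht
    exact hinj s t hs.1 ht.1 h
  · intro r hr
    have hr' : r ∈ Finset.range (Sset w i).card :=
      Finset.mem_range.mpr (lt_of_lt_of_le (Finset.mem_range.mp hr) hx)
    obtain ⟨s, hs, hsr⟩ := hsurj r hr'
    have hsr' : r = Mf w i (s : ℕ) := hsr
    refine ⟨s, ?_, hsr'.symm⟩
    simp only [Finset.mem_filter]
    exact ⟨hs, by rw [← hsr']; exact Finset.mem_range.mp hr⟩

/-- count of first-`x` elements of `S` above a non-`S` position `p` with `M p < x`. -/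
lemma card_A_gt (w : Equiv.Perm (Fin n)) (i : Fin n) {x : ℕ} (hx : x ≤ (Sset w i).card)
    {p : Fin n} (hp : p ∉ Sset w i) (hMp : Mf w i (p : ℕ) < x) :
    (((Sset w i).filter (fun s : Fin n => Mf w i (s : ℕ) < x)).filter
      (fun s : Fin n => (p : ℕ) < (s : ℕ))).card = x - Mf w i (p : ℕ) := by
  classical
  set A := (Sset w i).filter (fun s : Fin n => Mf w i (s : ℕ) < x) with hA
  have hsplit := Finset.card_filter_add_card_filter_not
    (s := A) (p := fun s : Fin n => (s : ℕ) < (p : ℕ))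
  have h1 : A.filter (fun s : Fin n => (s : ℕ) < (p : ℕ))
      = (Sset w i).filter (fun k : Fin n => (k : ℕ) < (p : ℕ)) := by
    ext k
    simp only [hA, Finset.mem_filter]
    constructor
    · exact fun h => ⟨h.1.1, h.2⟩
    · intro h
      exact ⟨⟨h.1, lt_of_le_of_lt (Mf_mono w i (le_of_lt h.2)) hMp⟩, h.2⟩
  have h2 : A.filter (fun s : Fin n => ¬ (s : ℕ) < (p : ℕ))
      = A.filter (fun s : Fin n => (p : ℕ) < (s : ℕ)) := by
    ext k
    simp only [hA, Finset.mem_filter, not_lt]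
    constructor
    · intro h
      have hne : k ≠ p := by rintro rfl; exact hp h.1.1
      have hne' : (k : ℕ) ≠ (p : ℕ) := fun hc => hne (Fin.val_injective hc)
      exact ⟨h.1, by omega⟩
    · intro h
      exact ⟨h.1, le_of_lt h.2⟩
  rw [h1, h2] at hsplit
  have hAcard : A.card = x := card_A w i hx
  have hMfp : ((Sset w i).filter (fun k : Fin n => (k : ℕ) < (p : ℕ))).card = Mf w i (p : ℕ) := rfl
  omega


lemma part1 (w : Equiv.Perm (Fin n)) (i : Fin n) (x : ℕ)
    (v : Equiv.Perm (Fin n)) (hv : leftWeak v w) (hvi : lehmer v i = x) :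
    bmin w i x ≤ lehmer v := by
  classical
  intro j
  unfold bmin
  split
  · next h =>
    obtain ⟨hij, hwij⟩ := h
    rw [mext_eq, Fin.coe_castSucc, lehmer_eq]
    have key : Sset v i ⊆ (Sset v j) ∪ ((Sset w i).filter (fun k : Fin n => (k : ℕ) < (j : ℕ))) := by
      intro k hk
      rw [mem_Sset] at hk
      obtain ⟨hik, hvk⟩ := hk
      have hw : (i, k) ∈ Invs w := hv (mem_Invs.mpr ⟨hik, hvk⟩)
      rw [mem_Invs] at hw
      rcases lt_trichotomy (k : ℕ) (j : ℕ) with hlt | heq | hgt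
      · exact Finset.mem_union_right _ (Finset.mem_filter.mpr ⟨mem_Sset.mpr ⟨hw.1, hw.2⟩, hlt⟩)
      · exfalso
        have : k = j := Fin.val_injective heq
        subst this
        have : (w k : ℕ) < (w i : ℕ) := hw.2
        omega
      · apply Finset.mem_union_left
        rw [mem_Sset]
        refine ⟨Fin.lt_def.mpr hgt, ?_⟩
        rcases eq_or_lt_of_le hij with heq2 | hlt2
        · have : i = j := Fin.val_injective heq2
          subst this
          exact hvk
        · have hij' : i < j := Fin.lt_def.mpr hlt2
          have hnw : (i, j) ∉ Invs v := by
            intro hc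
            have := (mem_Invs.mp (hv hc)).2
            have : (w j : ℕ) < (w i : ℕ) := this
            omega
          have hvij : ¬ (v j < v i) := fun hc => hnw (mem_Invs.mpr ⟨hij', hc⟩)
          exact lt_of_lt_of_le hvk (le_of_not_gt hvij)
    have hcard : (Sset v i).card ≤ (Sset v j).card + Mf w i (j : ℕ) := by
      calc (Sset v i).card ≤ ((Sset v j) ∪ ((Sset w i).filter (fun k : Fin n => (k : ℕ) < (j : ℕ)))).card :=
            Finset.card_le_card key
        _ ≤ (Sset v j).card + Mf w i (j : ℕ) := Finset.card_union_le _ _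
    have hx : (Sset v i).card = x := by rw [← lehmer_eq]; exact hvi
    rw [hx] at hcard
    exact Nat.sub_le_iff_le_add.mpr hcard
  · exact Nat.zero_le _

section Construction

variable (w : Equiv.Perm (Fin n)) (i : Fin n) (x : ℕ)

/-- the underlying function of the minimal permutation, as natural number values. -/
def fv (p : Fin n) : ℕ :=
  if (i : ℕ) ≤ (p : ℕ) ∧ Mf w i (p : ℕ) < x then
    (if p ∈ Sset w i then (i : ℕ) + Mf w i (p : ℕ) else (p : ℕ) + x - Mf w i (p : ℕ))
  else (p : ℕ)

lemma i_notMem_S : i ∉ Sset w i := by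
  rw [mem_Sset]; rintro ⟨h, -⟩; exact lt_irrefl _ h

lemma Mf_le_sub {q : ℕ} (hq : (i : ℕ) ≤ q) : Mf w i q ≤ q - (i : ℕ) - 1 := by
  have := Mf_diff w i (i_notMem_S w i) hq
  have h0 : Mf w i (i : ℕ) = 0 := Mf_zero w i (le_refl _)
  omega

lemma x_le_n (hx2 : x ≤ (Sset w i).card) : x + (i : ℕ) + 1 ≤ n := by
  have h1 : ((Sset w i).filter (fun s : Fin n => Mf w i (s : ℕ) < x)).card ≤ n - (i : ℕ) - 1 := by
    apply card_between
    intro t ht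
    simp only [Finset.mem_filter, mem_Sset] at ht
    exact ⟨Fin.lt_def.mp ht.1.1, t.isLt⟩
  rw [card_A w i hx2] at h1
  have := i.isLt
  omega

lemma fv_lt (hx2 : x ≤ (Sset w i).card) (p : Fin n) : fv w i x p < n := by
  unfold fv
  split
  · next hg =>
    split
    · next hpS =>
      have := x_le_n w i x hx2
      omega
    · next hpS =>
      have h1 : (((Sset w i).filter (fun s : Fin n => Mf w i (s : ℕ) < x)).filter
          (fun s : Fin n => (p : ℕ) < (s : ℕ))).card ≤ n - (p : ℕ) - 1 := by
        apply card_between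
        intro t ht
        simp only [Finset.mem_filter] at ht
        exact ⟨ht.2, t.isLt⟩
      rw [card_A_gt w i hx2 hpS hg.2] at h1
      have := p.isLt
      omega
  · exact p.isLt

lemma fv_lower_nonS (p : Fin n) (hg : (i : ℕ) ≤ (p : ℕ) ∧ Mf w i (p : ℕ) < x)
    (hp : p ∉ Sset w i) : (i : ℕ) + x ≤ fv w i x p := by
  unfold fv
  rw [if_pos hg, if_neg hp]
  have := Mf_le_sub w i hg.1
  omega

lemma fv_key (p q : Fin n) (hpq : (p : ℕ) < (q : ℕ)) :
    (fv w i x q < fv w i x p ↔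
      ((i : ℕ) ≤ (p : ℕ) ∧ Mf w i (p : ℕ) < x ∧ p ∉ Sset w i ∧ q ∈ Sset w i ∧ Mf w i (q : ℕ) < x))
    ∧ fv w i x p ≠ fv w i x q := by
  classical
  have hab : Mf w i (p : ℕ) ≤ Mf w i (q : ℕ) := Mf_mono w i (le_of_lt hpq)
  by_cases hgp : (i : ℕ) ≤ (p : ℕ) ∧ Mf w i (p : ℕ) < x
  · by_cases hpS : p ∈ Sset w i
    · -- fv p = i + Mp
      have hfp : fv w i x p = (i : ℕ) + Mf w i (p : ℕ) := by unfold fv; rw [if_pos hgp, if_pos hpS]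
      by_cases hgq : (i : ℕ) ≤ (q : ℕ) ∧ Mf w i (q : ℕ) < x
      · by_cases hqS : q ∈ Sset w i
        · have hfq : fv w i x q = (i : ℕ) + Mf w i (q : ℕ) := by
            unfold fv; rw [if_pos hgq, if_pos hqS]
          have hlt := Mf_S_lt w i hpS hpq
          refine ⟨⟨fun h => by omega, ?_⟩, by omega⟩
          rintro ⟨-, -, h3, -, -⟩; exact absurd hpS h3
        · have hfq := fv_lower_nonS w i x q hgq hqS
          refine ⟨⟨fun h => by omega, ?_⟩, by omega⟩
          rintro ⟨-, -, h3, -, -⟩; exact absurd hpS h3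
      · have hfq : fv w i x q = (q : ℕ) := by unfold fv; rw [if_neg hgq]
        have hbx : x ≤ Mf w i (q : ℕ) := by
          rcases not_and_or.mp hgq with h | h
          · omega
          · omega
        have hqb := Mf_le_sub w i (le_trans hgp.1 (le_of_lt hpq))
        refine ⟨⟨fun h => by omega, ?_⟩, by omega⟩
        rintro ⟨-, -, -, -, h5⟩; omega
    · -- fv p = p + x - Mp, p ∉ S
      have hfp : fv w i x p = (p : ℕ) + x - Mf w i (p : ℕ) := by
        unfold fv; rw [if_pos hgp, if_neg hpS]
      have hlow := fv_lower_nonS w i x p hgp hpS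
      by_cases hgq : (i : ℕ) ≤ (q : ℕ) ∧ Mf w i (q : ℕ) < x
      · by_cases hqS : q ∈ Sset w i
        · have hfq : fv w i x q = (i : ℕ) + Mf w i (q : ℕ) := by
            unfold fv; rw [if_pos hgq, if_pos hqS]
          refine ⟨⟨fun _ => ⟨hgp.1, hgp.2, hpS, hqS, hgq.2⟩, fun _ => by omega⟩, by omega⟩
        · have hfq : fv w i x q = (q : ℕ) + x - Mf w i (q : ℕ) := by
            unfold fv; rw [if_pos hgq, if_neg hqS]
          have hdiff := Mf_diff w i hpS (le_of_lt hpq)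
          refine ⟨⟨fun h => by omega, ?_⟩, by omega⟩
          rintro ⟨-, -, -, h4, -⟩; exact absurd h4 hqS
      · have hfq : fv w i x q = (q : ℕ) := by unfold fv; rw [if_neg hgq]
        have hbx : x ≤ Mf w i (q : ℕ) := by
          rcases not_and_or.mp hgq with h | h
          · exfalso; exact h (le_trans hgp.1 (le_of_lt hpq))
          · omega
        have hdiff := Mf_diff w i hpS (le_of_lt hpq)
        refine ⟨⟨fun h => by omega, ?_⟩, by omega⟩
        rintro ⟨-, -, -, -, h5⟩; omega
  · -- ¬ good p : fv p = p
    have hfp : fv w i x p = (p : ℕ) := by unfold fv; rw [if_neg hgp]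
    by_cases hgq : (i : ℕ) ≤ (q : ℕ) ∧ Mf w i (q : ℕ) < x
    · have hpi : (p : ℕ) < (i : ℕ) := by
        rcases not_and_or.mp hgp with h | h
        · omega
        · omega
      by_cases hqS : q ∈ Sset w i
      · have hfq : fv w i x q = (i : ℕ) + Mf w i (q : ℕ) := by
          unfold fv; rw [if_pos hgq, if_pos hqS]
        refine ⟨⟨fun h => by omega, ?_⟩, by omega⟩
        rintro ⟨h1, -, -, -, -⟩; omega
      · have hfq := fv_lower_nonS w i x q hgq hqS
        refine ⟨⟨fun h => by omega, ?_⟩, by omega⟩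
        rintro ⟨h1, -, -, -, -⟩; omega
    · have hfq : fv w i x q = (q : ℕ) := by unfold fv; rw [if_neg hgq]
      refine ⟨⟨fun h => by omega, ?_⟩, by omega⟩
      rintro ⟨h1, h2, -, -, -⟩
      rcases not_and_or.mp hgp with h | h
      · omega
      · rcases not_and_or.mp hgq with h' | h'
        · omega
        · omega

end Construction

lemma bmin_self (w : Equiv.Perm (Fin n)) (i : Fin n) (x : ℕ) : bmin w i x i = x := by
  unfold bmin
  rw [if_pos ⟨le_refl _, le_refl _⟩, mext_eq, Fin.coe_castSucc, Mf_zero w i (le_refl _),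
    Nat.sub_zero]

lemma part2 (w : Equiv.Perm (Fin n)) (i : Fin n) (x : ℕ)
    (hx1 : 1 ≤ x) (hx2 : x ≤ (Sset w i).card) : bmin w i x ∈ codeSet w := by
  classical
  set f : Fin n → Fin n := fun p => ⟨fv w i x p, fv_lt w i x hx2 p⟩ with hf
  have hfval : ∀ p, (f p : ℕ) = fv w i x p := fun p => rfl
  have hinj : Function.Injective f := by
    intro p q h
    by_contra hne
    have hval : (p : ℕ) ≠ (q : ℕ) := fun hc => hne (Fin.val_injective hc)
    have hfv : fv w i x p = fv w i x q := by
      have := congrArg Fin.val h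
      rwa [hfval, hfval] at this
    rcases lt_or_gt_of_ne hval with hlt | hgt
    · exact (fv_key w i x p q hlt).2 hfv
    · exact (fv_key w i x q p hgt).2 hfv.symm
  set v := Equiv.ofBijective f (Finite.injective_iff_bijective.mp hinj) with hv
  have happ : ∀ p, v p = f p := fun p => rfl
  have hvlt : ∀ p q : Fin n, (v p < v q) ↔ fv w i x p < fv w i x q := by
    intro p q
    rw [happ, happ, Fin.lt_def, hfval, hfval]
  refine ⟨v, ?_, ?_⟩
  · -- leftWeak v w
    intro pr hpr
    rw [mem_Invs] at hpr ⊢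
    obtain ⟨h1, h2⟩ := hpr
    have hlt : (pr.1 : ℕ) < (pr.2 : ℕ) := h1
    have h2' : fv w i x pr.2 < fv w i x pr.1 := (hvlt pr.2 pr.1).mp h2
    obtain ⟨k1, k2, k3, k4, k5⟩ := (fv_key w i x pr.1 pr.2 hlt).1.mp h2'
    refine ⟨h1, ?_⟩
    rw [mem_Sset] at k4
    rcases eq_or_lt_of_le k1 with heq | hlt2
    · have hpi : pr.1 = i := Fin.val_injective heq.symm
      rw [hpi]
      exact k4.2
    · have hne : pr.1 ≠ i := by
        intro hc; rw [hc] at hlt2; exact lt_irrefl _ hlt2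
      have hw1 : ¬ (w pr.1 < w i) := fun hc => k3 (mem_Sset.mpr ⟨Fin.lt_def.mpr hlt2, hc⟩)
      have hwne : w pr.1 ≠ w i := fun hc => hne (w.injective hc)
      have : w i < w pr.1 := lt_of_le_of_ne (le_of_not_gt hw1) (Ne.symm hwne)
      exact lt_trans k4.2 this
  · -- lehmer v = bmin w i x
    funext j
    rw [lehmer_eq]
    by_cases hgj : (i : ℕ) ≤ (j : ℕ) ∧ Mf w i (j : ℕ) < x
    · by_cases hjS : j ∈ Sset w i
      · -- inversion position: both sides 0
        have hempty : Sset v j = ∅ := by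
          rw [Finset.eq_empty_iff_forall_notMem]
          intro k hk
          rw [mem_Sset] at hk
          obtain ⟨hjk, hvk⟩ := hk
          have hjk' : (j : ℕ) < (k : ℕ) := hjk
          obtain ⟨-, -, h3, -, -⟩ :=
            (fv_key w i x j k hjk').1.mp ((hvlt k j).mp hvk)
          exact h3 hjS
        rw [hempty, Finset.card_empty]
        have hwj : (w j : ℕ) < (w i : ℕ) := (mem_Sset.mp hjS).2
        unfold bmin
        rw [if_neg (by rintro ⟨-, h⟩; omega)]
      · -- good, non-inversion: both sides x - M j
        have hset : Sset v j = ((Sset w i).filter (fun s : Fin n => Mf w i (s : ℕ) < x)).filter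
            (fun s : Fin n => (j : ℕ) < (s : ℕ)) := by
          ext k
          rw [mem_Sset]
          simp only [Finset.mem_filter]
          constructor
          · rintro ⟨hjk, hvk⟩
            have hjk' : (j : ℕ) < (k : ℕ) := hjk
            obtain ⟨-, -, -, h4, h5⟩ :=
              (fv_key w i x j k hjk').1.mp ((hvlt k j).mp hvk)
            exact ⟨⟨h4, h5⟩, hjk'⟩
          · rintro ⟨⟨hkS, hkM⟩, hjk⟩
            refine ⟨Fin.lt_def.mpr hjk, ?_⟩
            rw [hvlt]
            exact (fv_key w i x j k hjk).1.mpr ⟨hgj.1, hgj.2, hjS, hkS, hkM⟩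
        rw [hset, card_A_gt w i hx2 hjS hgj.2]
        have hwij : (w i : ℕ) ≤ (w j : ℕ) := by
          rcases eq_or_lt_of_le hgj.1 with heq | hlt2
          · have : i = j := Fin.val_injective heq
            rw [this]
          · have hne : j ≠ i := by
              intro hc; rw [hc] at hlt2; exact lt_irrefl _ hlt2
            have hw1 : ¬ (w j < w i) := fun hc => hjS (mem_Sset.mpr ⟨Fin.lt_def.mpr hlt2, hc⟩)
            have hwne : w j ≠ w i := fun hc => hne (w.injective hc)
            have : w i < w j := lt_of_le_of_ne (le_of_not_gt hw1) (Ne.symm hwne)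
            exact le_of_lt this
        unfold bmin
        rw [if_pos ⟨hgj.1, hwij⟩, mext_eq, Fin.coe_castSucc]
    · -- not good: both sides 0
      have hempty : Sset v j = ∅ := by
        rw [Finset.eq_empty_iff_forall_notMem]
        intro k hk
        rw [mem_Sset] at hk
        obtain ⟨hjk, hvk⟩ := hk
        have hjk' : (j : ℕ) < (k : ℕ) := hjk
        obtain ⟨h1, h2, -, -, -⟩ :=
          (fv_key w i x j k hjk').1.mp ((hvlt k j).mp hvk)
        exact hgj ⟨h1, h2⟩
      rw [hempty, Finset.card_empty]
      unfold bmin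
      split
      · next h =>
        rw [mext_eq, Fin.coe_castSucc]
        rcases not_and_or.mp hgj with h' | h'
        · exact absurd h.1 h'
        · omega
      · rfl

end BminAux

/-- Lemma 4.4: for `i ∈ [n]` and `1 ≤ x ≤ c_i(w)`, every `y ∈ c(Λ_w)` with `i`-th
coordinate `x` satisfies `b_{i,x}(w) ≤ y` in the product order; hence `b_{i,x}(w)` is
the unique minimal element of `c(Λ_w)` whose `i`-th coordinate is `x`. -/
theorem bmin_unique_minimal {n : ℕ} (w : Equiv.Perm (Fin n)) (i : Fin n) (x : ℕ)
    (hx1 : 1 ≤ x) (hx2 : x ≤ lehmer w i) :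
    (∀ y ∈ codeSet w, y i = x → bmin w i x ≤ y) ∧
    bmin w i x ∈ codeSet w ∧
    (∀ z ∈ codeSet w, z i = x →
      (∀ y ∈ codeSet w, y i = x → ¬ y < z) → z = bmin w i x) := by
  have hx2' : x ≤ (BminAux.Sset w i).card := by
    rw [← BminAux.lehmer_eq]; exact hx2
  have p1 : ∀ y ∈ codeSet w, y i = x → bmin w i x ≤ y := by
    rintro y ⟨v, hv, rfl⟩ hyi
    exact BminAux.part1 w i x v hv hyi
  have p2 : bmin w i x ∈ codeSet w := BminAux.part2 w i x hx1 hx2'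
  refine ⟨p1, p2, ?_⟩
  intro z hz hzi hmin
  have h1 : bmin w i x ≤ z := p1 z hz hzi
  have h2 := hmin (bmin w i x) p2 (BminAux.bmin_self w i x)
  by_contra hne
  exact h2 (lt_of_le_of_ne h1 (fun hc => hne hc.symm))
end
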